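/- Let A, B, C be noncollinear points in the plane with a = dist B C, b = dist A C, c = dist A B satisfying a ≤ b ≤ c, and angles β = ∠ A B C, γ = ∠ B C A. If tan β ≤ sin γ, then β < π/2 and b ≤ c · cos β (equivalently, 1/cos β ≤ c/b). -/

import Mathlib

open EuclideanGeometry

lemma law_sines_aux {V : Type*} [NormedAddCommGroup V] [InnerProductSpace ℝ V]
    (u v : V) :
    Real.sin (InnerProductGeometry.angle u v) * (‖u‖ * ‖v‖) =
      Real.sin (InnerProductGeometry.angle (-v) (u - v)) * (‖-v‖ * ‖u - v‖) := by
  rw [InnerProductGeometry.sin_angle_mul_norm_mul_norm,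
    InnerProductGeometry.sin_angle_mul_norm_mul_norm]
  congr 1
  simp only [inner_sub_left, inner_sub_right, inner_neg_left, inner_neg_right,
    real_inner_comm u v]
  ring

lemma law_sines (A B C : EuclideanSpace ℝ (Fin 2)) :
    Real.sin (∠ A B C) * (dist A B * dist C B) =
      Real.sin (∠ B C A) * (dist B C * dist A C) := by
  have h := law_sines_aux (A -ᵥ B) (C -ᵥ B)
  have h1 : -(C -ᵥ B) = B -ᵥ C := neg_vsub_eq_vsub_rev C B
  have h2 : (A -ᵥ B) - (C -ᵥ B) = A -ᵥ C := vsub_sub_vsub_cancel_right A C B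
  rw [h1, h2] at h
  simpa only [EuclideanGeometry.angle, dist_eq_norm_vsub] using h

/-- If, in a nondegenerate triangle `ABC` with side lengths `a ≤ b ≤ c`
(`a = dist B C`, `b = dist A C`, `c = dist A B`) and angles `β = ∠ A B C`,
`γ = ∠ B C A`, one has `tan β ≤ sin γ`, then `β < π/2` and `b ≤ c · cos β`
(equivalently `1/cos β ≤ c/b`). -/
theorem tan_le_sin_imp_b_le_c_cos
    (A B C : EuclideanSpace ℝ (Fin 2))
    (hncol : ¬ Collinear ℝ ({A, B, C} : Set (EuclideanSpace ℝ (Fin 2))))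
    (a b c : ℝ) (ha : a = dist B C) (hb : b = dist A C) (hc : c = dist A B)
    (hab : a ≤ b) (hbc : b ≤ c)
    (β γ : ℝ) (hβ : β = ∠ A B C) (hγ : γ = ∠ B C A)
    (h : Real.tan β ≤ Real.sin γ) :
    β < Real.pi / 2 ∧ b ≤ c * Real.cos β := by
  have hsetBCA : ({B, C, A} : Set (EuclideanSpace ℝ (Fin 2))) = {A, B, C} := by
    ext x; simp; tauto
  have hsetCAB : ({C, A, B} : Set (EuclideanSpace ℝ (Fin 2))) = {A, B, C} := by
    ext x; simp; tauto
  have hncol2 : ¬ Collinear ℝ ({B, C, A} : Set (EuclideanSpace ℝ (Fin 2))) := by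
    rw [hsetBCA]; exact hncol
  have hncol3 : ¬ Collinear ℝ ({C, A, B} : Set (EuclideanSpace ℝ (Fin 2))) := by
    rw [hsetCAB]; exact hncol
  have hBA : B ≠ A := by
    rintro rfl; exact hncol2 (by simpa using collinear_pair ℝ C B)
  have hCA : C ≠ A := by
    rintro rfl; exact hncol (by
      have : ({C, B, C} : Set (EuclideanSpace ℝ (Fin 2))) = {C, B} := by ext x; simp; tauto
      rw [this]; exact collinear_pair ℝ C B)
  have hβpos : 0 < β := hβ ▸ angle_pos_of_not_collinear hncol
  have hβlt : β < Real.pi := hβ ▸ angle_lt_pi_of_not_collinear hncol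
  have hγpos : 0 < γ := hγ ▸ angle_pos_of_not_collinear hncol2
  have hγlt : γ < Real.pi := hγ ▸ angle_lt_pi_of_not_collinear hncol2
  have hαpos : 0 < ∠ C A B := angle_pos_of_not_collinear hncol3
  have hsum : β + γ + ∠ C A B = Real.pi := by
    rw [hβ, hγ]; exact angle_add_angle_add_angle_eq_pi C hBA
  have hsinβ : 0 < Real.sin β := Real.sin_pos_of_pos_of_lt_pi hβpos hβlt
  have hsinγ : 0 < Real.sin γ := Real.sin_pos_of_pos_of_lt_pi hγpos hγlt
  have hapos : 0 < a := by
    rw [ha, dist_pos]; rintro rfl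
    exact hncol (by simpa using collinear_pair ℝ A B)
  have hbpos : 0 < b := by rw [hb, dist_pos]; exact fun e => hCA e.symm
  have hcpos : 0 < c := by rw [hc, dist_pos]; exact fun e => hBA e.symm
  -- law of sines: sin β * c = sin γ * b
  have hls : Real.sin β * c = Real.sin γ * b := by
    have := law_sines A B C
    rw [← hβ, ← hγ, ← hc, ← hb, ← ha, dist_comm C B, ← ha] at this
    have ha0 : a ≠ 0 := ne_of_gt hapos
    exact mul_right_cancel₀ ha0 (by linear_combination this)
  -- β < π/2
  have hβhalf : β < Real.pi / 2 := by
    by_contra hge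
    push_neg at hge
    have hγlt' : γ < Real.pi - β := by nlinarith
    have hsinlt : Real.sin γ < Real.sin β := by
      rw [← Real.sin_pi_sub β]
      exact Real.sin_lt_sin_of_lt_of_le_pi_div_two (by linarith) (by linarith) hγlt'
    nlinarith [hls, hsinγ, hbpos]
  have hcosβ : 0 < Real.cos β := Real.cos_pos_of_mem_Ioo ⟨by linarith [Real.pi_pos], hβhalf⟩
  refine ⟨hβhalf, ?_⟩
  -- tan β = sin β / cos β ≤ sin γ = sin β * c / b
  rw [Real.tan_eq_sin_div_cos] at h
  have hsinγ_eq : Real.sin γ = Real.sin β * c / b := by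
    field_simp; linarith [hls]
  rw [hsinγ_eq] at h
  rw [div_le_div_iff₀ hcosβ hbpos] at h
  nlinarith [h, hsinβ]
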